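/- Let λ₁ < λ₂ < ⋯ < λₙ be positive reals, w₁,…,wₙ ≥ 0 weights not all zero, and fix L ∈ {2,…,n}. If Σ_{i=L}^{n} w_i > Σ_{i=1}^{L-1} w_i and α = (Σᵢ wᵢ)/(Σᵢ λᵢ wᵢ) satisfies αλ_L > 1, then αλ_L − 1 ≤ (λ_L − λ₁)/(λ_L + λ₁). -/

import Mathlib

open Finset

/-- Key inequality in the R-linear convergence proof: if the weights with index `≥ L`
dominate those with index `< L`, and the weighted Rayleigh-quotient stepsize
`α = (Σ wᵢ)/(Σ λᵢ wᵢ)` satisfies `αλ_L > 1`, then `αλ_L − 1 ≤ (λ_L − λ₁)/(λ_L + λ₁)`. -/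
theorem stmt6 {n : ℕ} (hn : 0 < n) (lam w : Fin n → ℝ)
    (hmono : StrictMono lam) (hpos : ∀ i, 0 < lam i)
    (hw : ∀ i, 0 ≤ w i) (hwne : w ≠ 0)
    (L : Fin n) (hL : 1 ≤ (L : ℕ))
    (hdom : ∑ i ∈ univ.filter (fun i => i < L), w i < ∑ i ∈ univ.filter (fun i => L ≤ i), w i)
    (hα : 1 < (∑ i, w i) / (∑ i, lam i * w i) * lam L) :
    (∑ i, w i) / (∑ i, lam i * w i) * lam L - 1 ≤
      (lam L - lam ⟨0, hn⟩) / (lam L + lam ⟨0, hn⟩) := by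
  set z : Fin n := ⟨0, hn⟩ with hz
  have hzL : z < L := by
    simp only [Fin.lt_def]
    exact lt_of_lt_of_le Nat.one_pos hL
  have hlz : lam z < lam L := hmono hzL
  have hT : 0 < ∑ i, lam i * w i := by
    obtain ⟨j, hj⟩ := Function.ne_iff.mp hwne
    refine Finset.sum_pos' (fun i _ => mul_nonneg (hpos i).le (hw i)) ⟨j, mem_univ j, ?_⟩
    exact mul_pos (hpos j) (lt_of_le_of_ne (hw j) (Ne.symm hj))
  have key : (∑ i, w i) * (lam L + lam z) ≤ 2 * ∑ i, lam i * w i := by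
    have hA : ∑ i ∈ univ.filter (fun i => i < L), w i * (lam L + lam z - 2 * lam i)
        ≤ (lam L - lam z) * ∑ i ∈ univ.filter (fun i => i < L), w i := by
      rw [Finset.mul_sum]
      apply Finset.sum_le_sum
      intro i _
      have hzi : lam z ≤ lam i := hmono.monotone (by rw [hz, Fin.le_def]; exact Nat.zero_le _)
      nlinarith [hw i]
    have hB : ∑ i ∈ univ.filter (fun i => ¬ i < L), w i * (lam L + lam z - 2 * lam i)
        ≤ -((lam L - lam z) * ∑ i ∈ univ.filter (fun i => L ≤ i), w i) := by
      have hfe : univ.filter (fun i : Fin n => ¬ i < L) = univ.filter (fun i => L ≤ i) := by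
        simp [not_lt]
      rw [hfe, Finset.mul_sum, ← Finset.sum_neg_distrib]
      apply Finset.sum_le_sum
      intro i hi
      have hLi : lam L ≤ lam i := hmono.monotone (by simpa using hi)
      nlinarith [hw i]
    have hsplit := Finset.sum_filter_add_sum_filter_not univ (fun i => i < L)
      (fun i => w i * (lam L + lam z - 2 * lam i))
    have expand : ∑ i, w i * (lam L + lam z - 2 * lam i)
        = (∑ i, w i) * (lam L + lam z) - 2 * ∑ i, lam i * w i := by
      rw [Finset.sum_mul, Finset.mul_sum, ← Finset.sum_sub_distrib]
      exact Finset.sum_congr rfl fun i _ => by ring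
    nlinarith [hdom]
  have hden : (0:ℝ) < lam L + lam z := add_pos (hpos L) (hpos z)
  rw [div_mul_eq_mul_div, div_sub_one hT.ne', div_le_div_iff₀ hT hden]
  nlinarith [key, hT, hpos L]
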